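/- For a quantum state ρ (positive semidefinite operator with trace 1) and a projector Π on a Hilbert space, the trace norm distance satisfies ‖ρ − ΠρΠ‖₁ ≤ 2·√(1 − tr(ΠρΠ)). -/

import Mathlib

open scoped ComplexOrder

/-- The positive semidefinite square root of a positive semidefinite matrix
(the definition Mathlib had in December 2024, since removed). -/
noncomputable def Matrix.PosSemidef.sqrt {n : Type*} [Fintype n] [DecidableEq n]
    {A : Matrix n n ℂ} (hA : A.PosSemidef) : Matrix n n ℂ :=
  hA.1.eigenvectorUnitary.1 * Matrix.diagonal ((↑) ∘ (√·) ∘ hA.1.eigenvalues) *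
  (star hA.1.eigenvectorUnitary : Matrix n n ℂ)

/-- The trace norm of a matrix: `‖A‖₁ = tr √(AᴴA)`. -/
noncomputable def traceNorm {n : Type*} [Fintype n] [DecidableEq n]
    (A : Matrix n n ℂ) : ℝ :=
  ((Matrix.posSemidef_conjTranspose_mul_self A).sqrt.trace).re

section Aux

open Matrix

variable {n : Type*} [Fintype n] [DecidableEq n]

lemma Matrix.PosSemidef.posSemidef_sqrt {A : Matrix n n ℂ} (hA : A.PosSemidef) :
    hA.sqrt.PosSemidef := by
  unfold Matrix.PosSemidef.sqrt
  refine (posSemidef_diagonal_iff.mpr ?_).mul_mul_conjTranspose_same _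
  intro i
  simp only [Function.comp_apply, Complex.zero_le_real]
  exact Real.sqrt_nonneg _

lemma Matrix.PosSemidef.sqrt_mul_self {A : Matrix n n ℂ} (hA : A.PosSemidef) :
    hA.sqrt * hA.sqrt = A := by
  unfold Matrix.PosSemidef.sqrt
  have hU : (star hA.1.eigenvectorUnitary : Matrix n n ℂ) * hA.1.eigenvectorUnitary.1 = 1 :=
    Unitary.coe_star_mul_self _
  have hD : Matrix.diagonal (((↑) ∘ (√·) ∘ hA.1.eigenvalues : n → ℂ)) *
      Matrix.diagonal ((↑) ∘ (√·) ∘ hA.1.eigenvalues) =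
        Matrix.diagonal (RCLike.ofReal ∘ hA.1.eigenvalues) := by
    rw [Matrix.diagonal_mul_diagonal]
    congr 1; funext i
    simp only [Function.comp_apply, ← Complex.ofReal_mul,
      Real.mul_self_sqrt (hA.eigenvalues_nonneg i)]
    rfl
  conv_rhs => rw [hA.1.spectral_theorem]
  rw [Unitary.conjStarAlgAut_apply]
  calc _ = hA.1.eigenvectorUnitary.1 * (Matrix.diagonal (((↑) ∘ (√·) ∘ hA.1.eigenvalues : n → ℂ)) *
      ((star hA.1.eigenvectorUnitary : Matrix n n ℂ) * hA.1.eigenvectorUnitary.1) *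
      Matrix.diagonal ((↑) ∘ (√·) ∘ hA.1.eigenvalues)) *
        (star hA.1.eigenvectorUnitary : Matrix n n ℂ) := by
        simp only [Matrix.mul_assoc]
    _ = _ := by rw [hU, Matrix.mul_one, hD]


-- Cauchy–Schwarz for complex sums
lemma abs_sum_conj_mul_le {ι : Type*} [Fintype ι] (a b : ι → ℂ) :
    ‖(∑ k, (starRingEnd ℂ) (a k) * b k)‖ ≤
      Real.sqrt (∑ k, Complex.normSq (a k)) * Real.sqrt (∑ k, Complex.normSq (b k)) := by
  calc ‖(∑ k, (starRingEnd ℂ) (a k) * b k)‖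
      ≤ ∑ k, ‖((starRingEnd ℂ) (a k) * b k)‖ := by
        simpa using norm_sum_le Finset.univ (fun k => (starRingEnd ℂ) (a k) * b k)
    _ = ∑ k, ‖(a k)‖ * ‖(b k)‖ := by
        simp [_root_.map_mul]
    _ ≤ Real.sqrt (∑ k, ‖(a k)‖ ^ 2) * Real.sqrt (∑ k, ‖(b k)‖ ^ 2) :=
        Real.sum_mul_le_sqrt_mul_sqrt _ _ _
    _ = Real.sqrt (∑ k, Complex.normSq (a k)) * Real.sqrt (∑ k, Complex.normSq (b k)) := by
        simp [Complex.sq_norm]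

lemma psd_diag_re_nonneg {M : Matrix n n ℂ} (hM : M.PosSemidef) (i : n) :
    0 ≤ (M i i).re := by
  exact (Complex.le_def.mp (hM.diag_nonneg (i := i))).1

lemma psd_trace_re_nonneg {M : Matrix n n ℂ} (hM : M.PosSemidef) :
    0 ≤ M.trace.re := by
  rw [Matrix.trace]
  rw [show (∑ i, M.diag i).re = ∑ i, (M i i).re by simp [Matrix.diag, Complex.re_sum]]
  exact Finset.sum_nonneg fun i _ => psd_diag_re_nonneg hM i

lemma conj_mul_self_sum (M : Matrix n n ℂ) (j : n) :
    (Mᴴ * M) j j = ∑ k, ((Complex.normSq (M k j) : ℝ) : ℂ) := by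
  rw [Matrix.mul_apply]
  congr 1; funext k
  rw [Matrix.conjTranspose_apply, Complex.star_def, Complex.normSq_eq_conj_mul_self]

lemma col_normSq_le_one {B : Matrix n n ℂ} (hB : (1 - Bᴴ * B).PosSemidef)
    {V : Matrix n n ℂ} (hV : Vᴴ * V = 1) (j : n) :
    ∑ k, Complex.normSq ((B * V) k j) ≤ 1 := by
  have hpsd := hB.conjTranspose_mul_mul_same V
  have h0 := psd_diag_re_nonneg hpsd j
  have hexp : Vᴴ * (1 - Bᴴ * B) * V = 1 - (B * V)ᴴ * (B * V) := by
    rw [Matrix.mul_sub, Matrix.mul_one, Matrix.sub_mul, hV]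
    congr 1
    simp only [Matrix.conjTranspose_mul, Matrix.mul_assoc]
  rw [hexp] at h0
  have h1 : ((1 : Matrix n n ℂ) - (B * V)ᴴ * (B * V)) j j
      = 1 - ∑ k, ((Complex.normSq ((B * V) k j) : ℝ) : ℂ) := by
    rw [Matrix.sub_apply, Matrix.one_apply_eq, conj_mul_self_sum]
  rw [h1] at h0
  have : (0:ℝ) ≤ 1 - ∑ k, Complex.normSq ((B * V) k j) := by
    simpa [Complex.re_sum] using h0
  linarith

lemma trace_mul_diagonal (N : Matrix n n ℂ) (c : n → ℂ) :
    (N * Matrix.diagonal c).trace = ∑ j, N j j * c j := by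
  simp [Matrix.trace, Matrix.diag, Matrix.mul_diagonal]
variable {n : Type*} [Fintype n] [DecidableEq n]

lemma exists_polar (A : Matrix n n ℂ) :
    ∃ (U V : Matrix n n ℂ) (s : n → ℝ),
      (∀ i, 0 ≤ s i) ∧ Vᴴ * V = 1 ∧
      (1 - Uᴴ * U).PosSemidef ∧
      (Matrix.posSemidef_conjTranspose_mul_self A).sqrt
        = V * Matrix.diagonal (fun i => (s i : ℂ)) * Vᴴ ∧
      U * (Matrix.posSemidef_conjTranspose_mul_self A).sqrt = A ∧
      Uᴴ * A = (Matrix.posSemidef_conjTranspose_mul_self A).sqrt := by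
  have hAA := Matrix.posSemidef_conjTranspose_mul_self A
  set hH : (Aᴴ * A).IsHermitian := hAA.1 with hHdef
  set V : Matrix n n ℂ := hH.eigenvectorUnitary.1 with hVdef
  set d : n → ℝ := hH.eigenvalues with hddef
  have hd : ∀ i, 0 ≤ d i := hAA.eigenvalues_nonneg
  have hVV : Vᴴ * V = 1 := by
    simpa only [Matrix.star_eq_conjTranspose] using
      (Matrix.mem_unitaryGroup_iff'.mp hH.eigenvectorUnitary.2)
  have hVV' : V * Vᴴ = 1 := by
    simpa only [Matrix.star_eq_conjTranspose] using
      (Matrix.mem_unitaryGroup_iff.mp hH.eigenvectorUnitary.2)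
  have hdiag : Vᴴ * (Aᴴ * A) * V = Matrix.diagonal (fun i => (d i : ℂ)) := by
    have := Matrix.IsHermitian.conjStarAlgAut_star_eigenvectorUnitary hH
    rw [Unitary.conjStarAlgAut_star_apply] at this
    exact this
  have hsqrt : (Matrix.posSemidef_conjTranspose_mul_self A).sqrt
      = V * Matrix.diagonal (fun i => ((Real.sqrt (d i) : ℝ) : ℂ)) * Vᴴ := rfl
  set g : n → ℝ := fun i => if d i = 0 then 0 else (Real.sqrt (d i))⁻¹ with hgdef
  set G : Matrix n n ℂ := Matrix.diagonal (fun i => (g i : ℂ)) with hGdef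
  set e : n → ℝ := fun i => if d i = 0 then 0 else 1 with hedef
  set U : Matrix n n ℂ := A * (V * G * Vᴴ) with hUdef
  have hr1 : ∀ i, g i * d i * g i = e i := by
    intro i
    by_cases h : d i = 0
    · simp [hgdef, hedef, h]
    · have hsq : Real.sqrt (d i) ≠ 0 := by
        simp [Real.sqrt_eq_zero' , not_or, h]
        exact lt_of_le_of_ne (hd i) (Ne.symm h)
      simp only [hgdef, hedef, if_neg h]
      field_simp
      rw [Real.sq_sqrt (hd i)]
  have hr2 : ∀ i, g i * d i = Real.sqrt (d i) := by
    intro i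
    by_cases h : d i = 0
    · simp [hgdef, h]
    · have hsq : Real.sqrt (d i) ≠ 0 := by
        simp [Real.sqrt_eq_zero', not_or, h]
        exact lt_of_le_of_ne (hd i) (Ne.symm h)
      simp only [hgdef, if_neg h]
      field_simp
      rw [Real.sq_sqrt (hd i)]
  have hr3 : ∀ i, g i * Real.sqrt (d i) = e i := by
    intro i
    by_cases h : d i = 0
    · simp [hgdef, hedef, h]
    · have hsq : Real.sqrt (d i) ≠ 0 := by
        simp [Real.sqrt_eq_zero', not_or, h]
        exact lt_of_le_of_ne (hd i) (Ne.symm h)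
      simp only [hgdef, hedef, if_neg h, inv_mul_cancel₀ hsq]
  have hD1 : G * Matrix.diagonal (fun i => (d i : ℂ)) * G
      = Matrix.diagonal (fun i => ((e i : ℝ) : ℂ)) := by
    rw [hGdef, Matrix.diagonal_mul_diagonal, Matrix.diagonal_mul_diagonal]
    have hfun : (fun i => ((g i : ℂ) * (d i : ℂ) * (g i : ℂ))) = (fun i => ((e i : ℝ) : ℂ)) :=
      funext fun i => by rw [← Complex.ofReal_mul, ← Complex.ofReal_mul, hr1 i]
    rw [hfun]
  have hD2 : G * Matrix.diagonal (fun i => (d i : ℂ))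
      = Matrix.diagonal (fun i => ((Real.sqrt (d i) : ℝ) : ℂ)) := by
    rw [hGdef, Matrix.diagonal_mul_diagonal]
    have hfun : (fun i => ((g i : ℂ) * (d i : ℂ))) = (fun i => ((Real.sqrt (d i) : ℝ) : ℂ)) :=
      funext fun i => by rw [← Complex.ofReal_mul, hr2 i]
    rw [hfun]
  have hD3 : G * Matrix.diagonal (fun i => ((Real.sqrt (d i) : ℝ) : ℂ))
      = Matrix.diagonal (fun i => ((e i : ℝ) : ℂ)) := by
    rw [hGdef, Matrix.diagonal_mul_diagonal]
    have hfun : (fun i => ((g i : ℂ) * ((Real.sqrt (d i) : ℝ) : ℂ))) = (fun i => ((e i : ℝ) : ℂ)) :=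
      funext fun i => by rw [← Complex.ofReal_mul, hr3 i]
    rw [hfun]
  have hGH : Gᴴ = G := by
    simp [hGdef, Matrix.diagonal_conjTranspose, Pi.star_def, Complex.star_def,
      Complex.conj_ofReal]
  have h1 : Uᴴ = V * G * Vᴴ * Aᴴ := by
    simp [hUdef, Matrix.conjTranspose_mul, hGH, Matrix.mul_assoc]
  have hUU : Uᴴ * U = V * Matrix.diagonal (fun i => ((e i : ℝ) : ℂ)) * Vᴴ := by
    rw [h1, hUdef]
    calc V * G * Vᴴ * Aᴴ * (A * (V * G * Vᴴ))
        = V * (G * (Vᴴ * (Aᴴ * A) * V) * G) * Vᴴ := by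
          simp only [Matrix.mul_assoc]
      _ = V * (G * Matrix.diagonal (fun i => (d i : ℂ)) * G) * Vᴴ := by rw [hdiag]
      _ = V * Matrix.diagonal (fun i => ((e i : ℝ) : ℂ)) * Vᴴ := by
          rw [hD1]
  refine ⟨U, V, fun i => Real.sqrt (d i), fun i => Real.sqrt_nonneg _, hVV, ?_, hsqrt, ?_, ?_⟩
  · -- contraction
    rw [hUU]
    have h2 : (1 : Matrix n n ℂ) = V * 1 * Vᴴ := by rw [Matrix.mul_one, hVV']
    rw [h2]
    have h3 : V * 1 * Vᴴ - V * Matrix.diagonal (fun i => ((e i : ℝ) : ℂ)) * Vᴴ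
        = V * Matrix.diagonal (fun i => ((1 - e i : ℝ) : ℂ)) * Vᴴ := by
      rw [← Matrix.sub_mul, ← Matrix.mul_sub]
      congr 2
      rw [← Matrix.diagonal_one, Matrix.diagonal_sub]
      have hfun : (fun i => (1:ℂ) - ((e i : ℝ) : ℂ)) = (fun i => ((1 - e i : ℝ) : ℂ)) :=
        funext fun i => by push_cast; ring
      rw [hfun]
    rw [h3]
    have hpsd : (Matrix.diagonal (fun i => ((1 - e i : ℝ) : ℂ))).PosSemidef := by
      rw [Matrix.posSemidef_diagonal_iff]
      intro i
      rw [Complex.zero_le_real]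
      by_cases h : d i = 0 <;> simp [hedef, h]
    simpa using hpsd.mul_mul_conjTranspose_same V
  · -- U * sqrt = A
    rw [hsqrt, hUdef]
    have key : A * V * Matrix.diagonal (fun i => ((e i : ℝ) : ℂ)) = A * V := by
      ext k j
      rw [Matrix.mul_diagonal]
      by_cases h : d j = 0
      · have hcol : ((A * V)ᴴ * (A * V)) j j = 0 := by
          have hAV : (A * V)ᴴ * (A * V) = Vᴴ * (Aᴴ * A) * V := by
            simp [Matrix.conjTranspose_mul, Matrix.mul_assoc]
          rw [hAV, hdiag, Matrix.diagonal_apply_eq, h]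
          simp
        have hsum : ∑ k', Complex.normSq ((A * V) k' j) = 0 := by
          have hexp : ((A * V)ᴴ * (A * V)) j j
              = ∑ k', ((Complex.normSq ((A * V) k' j) : ℝ) : ℂ) := by
            rw [Matrix.mul_apply]
            congr 1; funext k'
            rw [Matrix.conjTranspose_apply]
            rw [Complex.star_def, Complex.normSq_eq_conj_mul_self]
          rw [hexp] at hcol
          have := congrArg Complex.re hcol
          simpa [Complex.re_sum] using this
        have hzero : (A * V) k j = 0 := by
          have := (Finset.sum_eq_zero_iff_of_nonneg
            (fun i _ => Complex.normSq_nonneg ((A * V) i j))).mp hsum k (Finset.mem_univ k)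
          exact Complex.normSq_eq_zero.mp this
        simp [hzero]
      · simp [hedef, h]
    calc A * (V * G * Vᴴ) * (V * Matrix.diagonal (fun i => ((Real.sqrt (d i) : ℝ) : ℂ)) * Vᴴ)
        = A * V * (G * ((Vᴴ * V) * (Matrix.diagonal (fun i => ((Real.sqrt (d i) : ℝ) : ℂ)) * Vᴴ))) := by
          simp only [Matrix.mul_assoc]
      _ = A * V * (G * Matrix.diagonal (fun i => ((Real.sqrt (d i) : ℝ) : ℂ))) * Vᴴ := by
          rw [hVV, Matrix.one_mul]
          simp only [Matrix.mul_assoc]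
      _ = A * V * Matrix.diagonal (fun i => ((e i : ℝ) : ℂ)) * Vᴴ := by rw [hD3]
      _ = A * V * Vᴴ := by rw [key]
      _ = A := by rw [Matrix.mul_assoc, hVV', Matrix.mul_one]
  · -- Uᴴ * A = sqrt
    rw [h1, hsqrt]
    have expand : V * G * (Vᴴ * (Aᴴ * A) * V) * Vᴴ = V * G * Vᴴ * Aᴴ * A := by
      simp only [Matrix.mul_assoc]
      rw [hVV', Matrix.mul_one]
    calc V * G * Vᴴ * Aᴴ * A
        = V * G * (Vᴴ * (Aᴴ * A) * V) * Vᴴ := expand.symm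
      _ = V * (G * Matrix.diagonal (fun i => (d i : ℂ))) * Vᴴ := by
          rw [hdiag]; simp only [Matrix.mul_assoc]
      _ = V * Matrix.diagonal (fun i => ((Real.sqrt (d i) : ℝ) : ℂ)) * Vᴴ := by rw [hD2]

lemma re_trace_conjTranspose_mul_le (B A : Matrix n n ℂ) (hB : (1 - Bᴴ * B).PosSemidef) :
    ((Bᴴ * A).trace).re ≤ traceNorm A := by
  obtain ⟨U, V, s, hs, hVV, hU, hspec, hUH, hUA⟩ := exists_polar A
  set D : Matrix n n ℂ := Matrix.diagonal (fun i => (s i : ℂ)) with hDdef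
  have htn : traceNorm A = ∑ i, s i := by
    unfold traceNorm
    rw [hspec, Matrix.trace_mul_cycle, hVV, Matrix.one_mul, Matrix.trace_diagonal]
    simp [Complex.re_sum]
  have hA : A = U * (V * D * Vᴴ) := by rw [← hspec, hUH]
  set N : Matrix n n ℂ := (B * V)ᴴ * (U * V) with hNdef
  have htr : (Bᴴ * A).trace = ∑ j, N j j * (s j : ℂ) := by
    conv_lhs => rw [hA]
    rw [show Bᴴ * (U * (V * D * Vᴴ)) = (Bᴴ * U * V * D) * Vᴴ from by
      simp only [Matrix.mul_assoc]]
    rw [Matrix.trace_mul_comm]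
    rw [show Vᴴ * (Bᴴ * U * V * D) = N * D from by
      simp only [hNdef, Matrix.conjTranspose_mul, Matrix.mul_assoc]]
    exact trace_mul_diagonal N _
  have hNle : ∀ j, (N j j).re ≤ 1 := by
    intro j
    have hentry : N j j = ∑ k, (starRingEnd ℂ) ((B * V) k j) * ((U * V) k j) := by
      rw [hNdef, Matrix.mul_apply]
      simp only [Matrix.conjTranspose_apply, Complex.star_def]
    have habs : ‖(N j j)‖ ≤ 1 := by
      rw [hentry]
      refine le_trans (abs_sum_conj_mul_le _ _) ?_
      have h1 := col_normSq_le_one hB hVV j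
      have h2 := col_normSq_le_one hU hVV j
      have s1 : Real.sqrt (∑ k, Complex.normSq ((B * V) k j)) ≤ 1 := by
        rw [show (1:ℝ) = Real.sqrt 1 by simp]
        exact Real.sqrt_le_sqrt h1
      have s2 : Real.sqrt (∑ k, Complex.normSq ((U * V) k j)) ≤ 1 := by
        rw [show (1:ℝ) = Real.sqrt 1 by simp]
        exact Real.sqrt_le_sqrt h2
      exact mul_le_one₀ s1 (Real.sqrt_nonneg _) s2
    exact le_trans (Complex.re_le_norm _) habs
  rw [htn, htr]
  rw [show (∑ j, N j j * (s j : ℂ)).re = ∑ j, (N j j).re * s j from by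
    rw [Complex.re_sum]; congr 1; funext j; simp [Complex.mul_re]]
  refine Finset.sum_le_sum fun j _ => ?_
  calc (N j j).re * s j ≤ 1 * s j := mul_le_mul_of_nonneg_right (hNle j) (hs j)
    _ = s j := one_mul _

lemma traceNorm_add_le (A B : Matrix n n ℂ) :
    traceNorm (A + B) ≤ traceNorm A + traceNorm B := by
  obtain ⟨U, V, s, hs, hVV, hU, hspec, hUH, hUA⟩ := exists_polar (A + B)
  have h1 : traceNorm (A + B) = ((Uᴴ * (A + B)).trace).re := by
    rw [hUA]; rfl
  rw [h1, Matrix.mul_add, Matrix.trace_add, Complex.add_re]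
  exact add_le_add (re_trace_conjTranspose_mul_le U A hU) (re_trace_conjTranspose_mul_le U B hU)

lemma frob_trace_re_eq (X : Matrix n n ℂ) :
    (Xᴴ * X).trace.re = ∑ p : n × n, Complex.normSq (X p.1 p.2) := by
  rw [Matrix.trace]
  rw [show (∑ j, (Xᴴ * X).diag j).re = ∑ j, ((Xᴴ * X) j j).re by
    simp [Matrix.diag, Complex.re_sum]]
  rw [Fintype.sum_prod_type]
  rw [Finset.sum_comm]
  congr 1; funext j
  rw [conj_mul_self_sum]
  simp [Complex.re_sum]

set_option maxHeartbeats 1000000 in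
lemma traceNorm_mul_le (X Y : Matrix n n ℂ) :
    traceNorm (X * Y) ≤ Real.sqrt ((Xᴴ * X).trace.re) * Real.sqrt ((Yᴴ * Y).trace.re) := by
  obtain ⟨U, V, s, hs, hVV, hU, hspec, hUH, hUA⟩ := exists_polar (X * Y)
  set M : Matrix n n ℂ := U * Yᴴ with hMdef
  have hMH : Mᴴ = Y * Uᴴ := by
    simp [hMdef, Matrix.conjTranspose_mul]
  have h1 : traceNorm (X * Y) = ((Mᴴ * X).trace).re := by
    have h2 : traceNorm (X * Y) = ((Uᴴ * (X * Y)).trace).re := by rw [hUA]; rfl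
    rw [h2]
    congr 1
    rw [hMH, Matrix.trace_mul_cycle Y Uᴴ X, ← Matrix.mul_assoc, Matrix.trace_mul_comm (X * Y) Uᴴ,
      Matrix.mul_assoc]
  have hentry : (Mᴴ * X).trace = ∑ p : n × n, (starRingEnd ℂ) (M p.1 p.2) * X p.1 p.2 := by
    rw [Matrix.trace, Fintype.sum_prod_type, Finset.sum_comm]
    refine Finset.sum_congr rfl fun j _ => ?_
    rw [Matrix.diag, Matrix.mul_apply]
    refine Finset.sum_congr rfl fun k _ => ?_
    rw [Matrix.conjTranspose_apply, Complex.star_def]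
  have habs : ((Mᴴ * X).trace).re ≤
      Real.sqrt (∑ p : n × n, Complex.normSq (M p.1 p.2)) *
        Real.sqrt (∑ p : n × n, Complex.normSq (X p.1 p.2)) := by
    refine le_trans (Complex.re_le_norm _) ?_
    rw [hentry]
    apply abs_sum_conj_mul_le
  have hMbound : (Mᴴ * M).trace.re ≤ (Yᴴ * Y).trace.re := by
    have hpsd : (Y * (1 - Uᴴ * U) * Yᴴ).PosSemidef := hU.mul_mul_conjTranspose_same Y
    have hsplit : Y * (1 - Uᴴ * U) * Yᴴ = Y * Yᴴ - Mᴴ * M := by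
      rw [Matrix.mul_sub, Matrix.mul_one, Matrix.sub_mul]
      congr 1
      rw [hMH, hMdef]
      simp only [Matrix.mul_assoc]
    have h0 := psd_trace_re_nonneg hpsd
    rw [hsplit, Matrix.trace_sub, Complex.sub_re] at h0
    have hYY : (Y * Yᴴ).trace = (Yᴴ * Y).trace := Matrix.trace_mul_comm Y Yᴴ
    rw [hYY] at h0
    linarith
  rw [h1]
  refine le_trans habs ?_
  rw [mul_comm]
  have e1 : (∑ p : n × n, Complex.normSq (X p.1 p.2)) = (Xᴴ * X).trace.re :=
    (frob_trace_re_eq X).symm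
  have e2 : Real.sqrt (∑ p : n × n, Complex.normSq (M p.1 p.2))
      ≤ Real.sqrt ((Yᴴ * Y).trace.re) := by
    apply Real.sqrt_le_sqrt
    rw [← frob_trace_re_eq M]
    exact hMbound
  rw [e1]
  exact mul_le_mul_of_nonneg_left e2 (Real.sqrt_nonneg _)


end Aux

section Main

open Matrix

/-- **Gentle measurement lemma.** For a quantum state `ρ` (positive semidefinite
with trace 1) and a projector `P`, one has `‖ρ − PρP‖₁ ≤ 2√(1 − tr(PρP))`. -/
theorem gentle_measurement {n : Type*} [Fintype n] [DecidableEq n]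
    (ρ P : Matrix n n ℂ)
    (hρ : ρ.PosSemidef) (hρtr : ρ.trace = 1)
    (hPherm : P.IsHermitian) (hPproj : P * P = P) :
    traceNorm (ρ - P * ρ * P) ≤ 2 * Real.sqrt (1 - ((P * ρ * P).trace).re) := by
  set Q : Matrix n n ℂ := 1 - P with hQdef
  have hPH : Pᴴ = P := hPherm
  have hQH : Qᴴ = Q := by
    rw [hQdef, Matrix.conjTranspose_sub, Matrix.conjTranspose_one, hPH]
  have hQQ : Q * Q = Q := by
    rw [hQdef, Matrix.sub_mul, Matrix.one_mul, Matrix.mul_sub, Matrix.mul_one, hPproj]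
    abel
  set S : Matrix n n ℂ := hρ.sqrt with hSdef
  have hSpsd := hρ.posSemidef_sqrt
  have hSH : Sᴴ = S := hSpsd.1
  have hSS : S * S = ρ := hρ.sqrt_mul_self
  have htrQρ : ((Q * ρ).trace).re = 1 - ((P * ρ * P).trace).re := by
    have h1 : (P * ρ * P).trace = (P * ρ).trace := by
      rw [Matrix.trace_mul_cycle P ρ P, hPproj]
    have h2 : (Q * ρ).trace = ρ.trace - (P * ρ).trace := by
      rw [hQdef, Matrix.sub_mul, Matrix.one_mul, Matrix.trace_sub]
    rw [h2, hρtr, h1, Complex.sub_re, Complex.one_re]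
  set ε : ℝ := 1 - ((P * ρ * P).trace).re with hεdef
  have hQρQ : ((Q * ρ * Q).trace).re = ε := by
    have h3 : (Q * ρ * Q).trace = (Q * ρ).trace := by
      rw [Matrix.trace_mul_cycle Q ρ Q, hQQ]
    rw [h3, htrQρ]
  have hQρQpsd : (Q * ρ * Q).PosSemidef := by
    have := hρ.mul_mul_conjTranspose_same Q
    rwa [hQH] at this
  have hε0 : 0 ≤ ε := by rw [← hQρQ]; exact psd_trace_re_nonneg hQρQpsd
  have e1 : ((Q * S)ᴴ * (Q * S)).trace = (Q * ρ * Q).trace := by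
    rw [Matrix.conjTranspose_mul, hSH, hQH, Matrix.trace_mul_comm]
    rw [show (Q * S) * (S * Q) = Q * ρ * Q from by
      conv_rhs => rw [← hSS]
      simp only [Matrix.mul_assoc]]
  have e2 : (Sᴴ * S).trace = ρ.trace := by rw [hSH, hSS]
  have e3 : ((P * S)ᴴ * (P * S)).trace = (P * ρ * P).trace := by
    rw [Matrix.conjTranspose_mul, hSH, hPH, Matrix.trace_mul_comm]
    rw [show (P * S) * (S * P) = P * ρ * P from by
      conv_rhs => rw [← hSS]
      simp only [Matrix.mul_assoc]]
  have e4 : ((S * Q)ᴴ * (S * Q)).trace = (Q * ρ * Q).trace := by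
    rw [Matrix.conjTranspose_mul, hSH, hQH]
    rw [show Q * S * (S * Q) = Q * ρ * Q from by
      conv_rhs => rw [← hSS]
      simp only [Matrix.mul_assoc]]
  have hsplit : ρ - P * ρ * P = Q * ρ + P * ρ * Q := by
    rw [hQdef]; noncomm_ring
  rw [hsplit]
  have t1 : traceNorm (Q * ρ) ≤ Real.sqrt ε := by
    have hfact : Q * ρ = Q * S * S := by rw [Matrix.mul_assoc, hSS]
    rw [hfact]
    refine le_trans (traceNorm_mul_le (Q * S) S) ?_
    have hx : ((Q * S)ᴴ * (Q * S)).trace.re = ε := by rw [e1]; exact hQρQ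
    have hy : (Sᴴ * S).trace.re = 1 := by rw [e2, hρtr, Complex.one_re]
    rw [hx, hy, Real.sqrt_one, mul_one]
  have t2 : traceNorm (P * ρ * Q) ≤ Real.sqrt ε := by
    have hfact : P * ρ * Q = (P * S) * (S * Q) := by
      conv_lhs => rw [← hSS]
      simp only [Matrix.mul_assoc]
    rw [hfact]
    refine le_trans (traceNorm_mul_le (P * S) (S * Q)) ?_
    have hx : ((P * S)ᴴ * (P * S)).trace.re = 1 - ε := by
      rw [e3, hεdef]; ring
    have hy : ((S * Q)ᴴ * (S * Q)).trace.re = ε := by rw [e4]; exact hQρQ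
    rw [hx, hy]
    have h1e : Real.sqrt (1 - ε) ≤ 1 := Real.sqrt_le_one.mpr (by linarith)
    calc Real.sqrt (1 - ε) * Real.sqrt ε ≤ 1 * Real.sqrt ε :=
          mul_le_mul_of_nonneg_right h1e (Real.sqrt_nonneg _)
      _ = Real.sqrt ε := one_mul _
  calc traceNorm (Q * ρ + P * ρ * Q)
      ≤ traceNorm (Q * ρ) + traceNorm (P * ρ * Q) := traceNorm_add_le _ _
    _ ≤ Real.sqrt ε + Real.sqrt ε := add_le_add t1 t2
    _ = 2 * Real.sqrt ε := by ring

end Main
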